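/- Rank of the eigenvalue matrix: Let C ⊆ F_q^{mℓ} be a λ-QT code with associated upper-triangular matrix G̃(x) and nonempty eigenvalue set. Let β_1,…,β_t be the distinct eigenvalues of C with eigenspaces V_{β_1},…,V_{β_t} of dimensions n_1,…,n_t over F. For each i, let V_i be an n_i × ℓ matrix over F whose rows form a basis of V_{β_i}, let H_i = (1, β_i, β_i², …, β_i^{m−1}) ⊗ V_i (an n_i × mℓ matrix), and let H be the (n_1 + ⋯ + n_t) × mℓ matrix obtained by stacking H_1,…,H_t. Then rank(H) = mℓ − dim_{F_q}(C). -/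

import Mathlib

open Polynomial
open scoped Matrix

-- L1: perp of kernel is row space
lemma perp_ker_mem_range_vecMul {K : Type*} [Field K] {ℓ : ℕ}
    (M : Matrix (Fin ℓ) (Fin ℓ) K) (u : Fin ℓ → K)
    (h : ∀ v : Fin ℓ → K, M.mulVec v = 0 → u ⬝ᵥ v = 0) :
    ∃ a : Fin ℓ → K, Matrix.vecMul a M = u := by
  by_cases hu : u ∈ LinearMap.range (Mᵀ.mulVecLin)
  · obtain ⟨a, ha⟩ := hu
    exact ⟨a, by rw [← Matrix.mulVec_transpose]; exact ha⟩
  · exfalso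
    obtain ⟨f, hfu, hmap⟩ :=
      Submodule.exists_dual_map_eq_bot_of_notMem hu inferInstance
    set w : Fin ℓ → K := fun j => f (Pi.single j 1) with hw
    have hfx : ∀ x : Fin ℓ → K, f x = ∑ i, x i * w i := by
      intro x
      have := LinearMap.pi_apply_eq_sum_univ f x
      rw [this]
      apply Finset.sum_congr rfl
      intro i _
      rw [smul_eq_mul, hw]
      congr 1
      congr 1
      funext j
      simp [Pi.single_apply, eq_comm]
    have hfp : ∀ y ∈ LinearMap.range (Mᵀ.mulVecLin), f y = 0 := by
      intro y hy
      have : f y ∈ Submodule.map f (LinearMap.range (Mᵀ.mulVecLin)) :=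
        Submodule.mem_map_of_mem hy
      rw [hmap] at this
      simpa using this
    have hMw : M.mulVec w = 0 := by
      funext k
      have hy : f (Mᵀ.mulVec (Pi.single k 1)) = 0 :=
        hfp _ ⟨Pi.single k 1, rfl⟩
      rw [hfx] at hy
      have : ∑ i, (Mᵀ.mulVec (Pi.single k 1)) i * w i = ∑ i, M k i * w i := by
        apply Finset.sum_congr rfl
        intro i _
        congr 1
        simp [Matrix.mulVec, dotProduct, Pi.single_apply, Matrix.transpose_apply]
      rw [this] at hy
      simpa [Matrix.mulVec, dotProduct] using hy
    have := h w hMw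
    rw [show u ⬝ᵥ w = f u from (hfx u).symm] at this
    exact hfu this

-- L2: extension of scalars preserves linear independence for Pi types
lemma linearIndependent_algebraMap_comp {Fq F ι κ : Type*} [Field Fq] [Field F] [Algebra Fq F]
    (v : κ → ι → Fq) (hv : LinearIndependent Fq v) :
    LinearIndependent F fun k => (algebraMap Fq F) ∘ (v k) := by
  rw [linearIndependent_iff'] at hv ⊢
  intro s g hsum i hi
  have key : ∀ φ : Module.Dual Fq F, φ (g i) = 0 := by
    intro φ
    refine hv s (fun k => φ (g k)) ?_ i hi
    funext p
    have hp : ∑ k ∈ s, g k * algebraMap Fq F (v k p) = 0 := by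
      have := congrFun hsum p
      simpa [Finset.sum_apply] using this
    have hp' : ∑ k ∈ s, (v k p) • (g k) = (0 : F) := by
      rw [← hp]
      apply Finset.sum_congr rfl
      intro k _
      rw [Algebra.smul_def, mul_comm]
    have := congrArg φ hp'
    rw [map_sum, map_zero] at this
    simpa [Finset.sum_apply, smul_eq_mul, mul_comm] using this
  exact (Module.forall_dual_apply_eq_zero_iff Fq (g i)).mp key

-- L3: dimension preserved under scalar extension of a code
lemma finrank_span_algebraMap_image {Fq F N : Type*} [Field Fq] [Field F] [Algebra Fq F]
    [Fintype N] (𝓒 : Submodule Fq (N → Fq)) :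
    Module.finrank F
      (Submodule.span F ((fun c => (algebraMap Fq F) ∘ c) '' (𝓒 : Set (N → Fq)))) =
    Module.finrank Fq 𝓒 := by
  classical
  set d := Module.finrank Fq 𝓒 with hd
  have : FiniteDimensional Fq (N → Fq) := inferInstance
  let b : Module.Basis (Fin d) Fq 𝓒 := Module.finBasis Fq 𝓒
  let w : Fin d → (N → Fq) := fun i => (b i : N → Fq)
  have hwind : LinearIndependent Fq w :=
    b.linearIndependent.map' 𝓒.subtype (Submodule.ker_subtype 𝓒)
  let φ : (N → Fq) →ₗ[Fq] (N → F) := (Algebra.linearMap Fq F).compLeft N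
  have hφw : ∀ c : N → Fq, φ c = (algebraMap Fq F) ∘ c := fun c => rfl
  have hspan : 𝓒 = Submodule.span Fq (Set.range w) := by
    have h2 := congrArg (Submodule.map 𝓒.subtype) b.span_eq
    rw [Submodule.map_span, Submodule.map_top, Submodule.range_subtype,
      ← Set.range_comp] at h2
    exact h2.symm
  have himg : (fun c => (algebraMap Fq F) ∘ c) '' (𝓒 : Set (N → Fq)) =
      (φ '' (𝓒 : Set (N → Fq))) := by
    ext x; simp [hφw]
  have himg2 : Submodule.span F ((fun c => (algebraMap Fq F) ∘ c) '' (𝓒 : Set (N → Fq))) =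
      Submodule.span F (Set.range fun i => (algebraMap Fq F) ∘ (w i)) := by
    rw [himg, hspan]
    have : φ '' (Submodule.span Fq (Set.range w) : Set (N → Fq)) =
        (Submodule.map φ (Submodule.span Fq (Set.range w)) : Set (N → F)) := rfl
    rw [this, Submodule.map_span]
    rw [Submodule.span_span_of_tower]
    congr 1
    rw [← Set.range_comp]
    rfl
  rw [himg2]
  have hind := linearIndependent_algebraMap_comp (F := F) w hwind
  rw [finrank_span_eq_card hind, Fintype.card_fin]

noncomputable def colPoly {K : Type*} [Field K] (m : ℕ) {ℓ : ℕ}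
    (c : ZMod m × Fin ℓ → K) (j : Fin ℓ) : K[X] :=
  ∑ i ∈ Finset.range m, C (c ((i : ZMod m), j)) * X ^ i

lemma colPoly_degree_lt {K : Type*} [Field K] (m : ℕ) [NeZero m] {ℓ : ℕ}
    (c : ZMod m × Fin ℓ → K) (j : Fin ℓ) : (colPoly m c j).degree < (m : WithBot ℕ) := by
  apply lt_of_le_of_lt (Polynomial.degree_sum_le _ _)
  rw [Finset.sup_lt_iff (by exact_mod_cast WithBot.bot_lt_coe m)]
  intro i hi
  apply lt_of_le_of_lt (Polynomial.degree_C_mul_X_pow_le _ _)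
  exact_mod_cast Finset.mem_range.mp hi

lemma colPoly_coeff {K : Type*} [Field K] (m : ℕ) [NeZero m] {ℓ : ℕ}
    (c : ZMod m × Fin ℓ → K) (j : Fin ℓ) (k : ZMod m) :
    (colPoly m c j).coeff k.val = c (k, j) := by
  rw [colPoly, Polynomial.finset_sum_coeff]
  have hk : k.val ∈ Finset.range m := Finset.mem_range.mpr (ZMod.val_lt k)
  rw [Finset.sum_eq_single k.val]
  · simp [Polynomial.coeff_C_mul, Polynomial.coeff_X_pow, ZMod.natCast_val, ZMod.cast_id]
  · intro i _ hne
    simp [Polynomial.coeff_C_mul, Polynomial.coeff_X_pow, Ne.symm hne]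
  · intro hnot; exact absurd hk hnot

lemma colPoly_eval {K : Type*} [Field K] (m : ℕ) [NeZero m] {ℓ : ℕ}
    (c : ZMod m × Fin ℓ → K) (j : Fin ℓ) (x : K) :
    Polynomial.eval x (colPoly m c j) = ∑ k : ZMod m, x ^ k.val * c (k, j) := by
  rw [colPoly, Polynomial.eval_finset_sum]
  apply Finset.sum_bij' (i := fun (i : ℕ) (_ : i ∈ Finset.range m) => ((i : ZMod m)))
    (j := fun (k : ZMod m) (_ : k ∈ Finset.univ) => k.val)
  · intro a ha
    exact Finset.mem_univ _
  · intro k _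
    exact Finset.mem_range.mpr (ZMod.val_lt k)
  · intro a ha
    exact ZMod.val_cast_of_lt (Finset.mem_range.mp ha)
  · intro k _
    exact ZMod.natCast_rightInverse k
  · intro a ha
    rw [Polynomial.eval_mul, Polynomial.eval_C, Polynomial.eval_pow, Polynomial.eval_X]
    rw [ZMod.val_cast_of_lt (Finset.mem_range.mp ha), mul_comm]


open scoped Classical in
lemma X_pow_sub_C_eq_prod_roots {F : Type*} [Field F] (m : ℕ) [NeZero m] (μ : F)
    (hμ : μ ≠ 0) (hm : (m : F) ≠ 0) (hs : Polynomial.Splits (X ^ m - C μ)) :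
    (X ^ m - C μ : F[X]) = ∏ x ∈ (X ^ m - C μ : F[X]).roots.toFinset, (X - C x) := by
  have hmon : (X ^ m - C μ : F[X]).Monic := monic_X_pow_sub_C μ (NeZero.ne m)
  have hsep : (X ^ m - C μ : F[X]).Separable := separable_X_pow_sub_C μ hm hμ
  have hnodup := Polynomial.nodup_roots hsep
  conv_lhs => rw [hs.eq_prod_roots_of_monic hmon]
  rw [Finset.prod_eq_multiset_prod]
  rw [Multiset.toFinset_val, Multiset.Nodup.dedup hnodup]

open scoped Classical in
lemma dvd_of_vanish_on_roots {F : Type*} [Field F] (m : ℕ) [NeZero m] (μ : F)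
    (hμ : μ ≠ 0) (hm : (m : F) ≠ 0) (hs : Polynomial.Splits (X ^ m - C μ))
    (u : F[X]) (h : ∀ x ∈ (X ^ m - C μ : F[X]).roots.toFinset, Polynomial.eval x u = 0) :
    (X ^ m - C μ : F[X]) ∣ u := by
  rw [X_pow_sub_C_eq_prod_roots m μ hμ hm hs]
  apply Finset.prod_dvd_of_coprime
  · intro x hx y hy hxy
    exact Polynomial.pairwise_coprime_X_sub_C Function.injective_id hxy
  · intro x hx
    exact Polynomial.dvd_iff_isRoot.mpr (h x hx)

lemma sum_modByMonic {F ι : Type*} [Field F] (s : Finset ι) (f : ι → F[X]) (P : F[X]) :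
    (∑ k ∈ s, f k) %ₘ P = ∑ k ∈ s, (f k) %ₘ P := by
  classical
  induction s using Finset.induction_on with
  | empty => simp [Polynomial.zero_modByMonic]
  | insert a s h ih => rw [Finset.sum_insert h, Finset.sum_insert h, Polynomial.add_modByMonic, ih]

lemma colPoly_map {K L : Type*} [Field K] [Field L] (φ : K →+* L) (m : ℕ) {ℓ : ℕ}
    (c : ZMod m × Fin ℓ → K) (j : Fin ℓ) :
    Polynomial.map φ (colPoly m c j) = colPoly m (fun p => φ (c p)) j := by
  rw [colPoly, Polynomial.map_sum]
  apply Finset.sum_congr rfl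
  intro i _
  rw [Polynomial.map_mul, Polynomial.map_pow, Polynomial.map_X, Polynomial.map_C]

lemma colPoly_modByMonic {K : Type*} [Field K] (m : ℕ) [NeZero m] {ℓ : ℕ} (μ : K)
    (c : ZMod m × Fin ℓ → K) (j : Fin ℓ) :
    (colPoly m c j) %ₘ (X ^ m - C μ) = colPoly m c j := by
  rw [Polynomial.modByMonic_eq_self_iff (monic_X_pow_sub_C μ (NeZero.ne m))]
  rw [degree_X_pow_sub_C (Nat.pos_of_ne_zero (NeZero.ne m))]
  exact colPoly_degree_lt m c j

open scoped Classical in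
/-- Hamming weight: the number of nonzero coordinates. -/
noncomputable def wt {ι K : Type*} [Fintype ι] [Zero K] (c : ι → K) : ℕ :=
  (Finset.univ.filter fun i => c i ≠ 0).card

/-- Minimum Hamming weight of a nonzero codeword of `S`, with `⊤` for the zero code. -/
noncomputable def minDist {ι K : Type*} [Fintype ι] [Zero K] (S : Set (ι → K)) : ℕ∞ :=
  sInf {n : ℕ∞ | ∃ c ∈ S, c ≠ 0 ∧ (wt c : ℕ∞) = n}

/-- The λ-constashift by ℓ positions on m×ℓ arrays: row 0 becomes λ times old last row. -/
def rho {Fq : Type*} [Field Fq] (m ℓ : ℕ) [NeZero m] (lam : Fq)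
    (c : ZMod m × Fin ℓ → Fq) : ZMod m × Fin ℓ → Fq :=
  fun p => (if p.1 = 0 then lam else 1) * c (p.1 - 1, p.2)

/-- Reduction of a vector of polynomials mod `X^m - λ`, written as an m×ℓ array. -/
noncomputable def arrOf {Fq : Type*} [Field Fq] (m ℓ : ℕ) [NeZero m] (lam : Fq)
    (v : Fin ℓ → Polynomial Fq) : ZMod m × Fin ℓ → Fq :=
  fun p => ((v p.2) %ₘ (Polynomial.X ^ m - Polynomial.C lam)).coeff (p.1).val


theorem rank_of_eigenvalue_matrix
    {Fq F : Type*} [Field Fq] [Fintype Fq] [Field F] [Algebra Fq F]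
    (m ℓ : ℕ) [NeZero m] (hcop : Nat.Coprime m (Fintype.card Fq))
    (lam : Fq) (hlam : lam ≠ 0)
    (hsplit : IsSplittingField Fq F (X ^ m - C lam))
    (𝓒 : Submodule Fq (ZMod m × Fin ℓ → Fq))
    (hQT : ∀ c ∈ 𝓒, rho m ℓ lam c ∈ 𝓒)
    (G : Matrix (Fin ℓ) (Fin ℓ) (Polynomial Fq))
    (htri : ∀ i j, j < i → G i j = 0)
    (hdeg : ∀ i j, i < j → (G i j).degree < (G j j).degree)
    (hdiv : ∀ j, G j j ∣ X ^ m - C lam)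
    (hfull : ∀ j, G j j = X ^ m - C lam → ∀ i, i ≠ j → G i j = 0)
    (hGen : ∀ v : Fin ℓ → Polynomial Fq,
      arrOf m ℓ lam v ∈ 𝓒 ↔ v ∈ Submodule.span (Polynomial Fq) (Set.range fun i j => G i j))
    (t : ℕ) (ht : 0 < t) (β : Fin t → F) (hβinj : Function.Injective β)
    (hβΩ : ∀ i, β i ^ m = algebraMap Fq F lam)
    (hβroot : ∀ i, Polynomial.aeval (β i) G.det = 0)
    (hβall : ∀ x : F, x ^ m = algebraMap Fq F lam → Polynomial.aeval x G.det = 0 → ∃ i, β i = x)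
    (n : Fin t → ℕ) (V : ∀ i, Matrix (Fin (n i)) (Fin ℓ) F)
    (hVind : ∀ i, LinearIndependent F (fun r => V i r))
    (hVspan : ∀ i, Submodule.span F (Set.range fun r => V i r) =
      LinearMap.ker (Matrix.mulVecLin (G.map fun p => Polynomial.aeval (β i) p)))
    (H : Matrix ((i : Fin t) × Fin (n i)) (ZMod m × Fin ℓ) F)
    (hH : ∀ ir p, H ir p = β ir.1 ^ (p.1).val * V ir.1 ir.2 p.2)
 :
    H.rank = m * ℓ - Module.finrank Fq 𝓒 := by
  classical
  have hm0 : m ≠ 0 := NeZero.ne m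
  have hmF : (m : F) ≠ 0 := by
    intro h
    have hm : (m : Fq) = 0 := by
      apply (algebraMap Fq F).injective
      rw [map_natCast, map_zero]
      exact h
    have hchar : ringChar Fq ∣ m := (CharP.cast_eq_zero_iff Fq (ringChar Fq) m).mp hm
    obtain ⟨nn, hp, hcard⟩ := FiniteField.card Fq (ringChar Fq)
    have hdvd : ringChar Fq ∣ Fintype.card Fq := by
      rw [hcard]; exact dvd_pow_self _ (by positivity)
    have : ringChar Fq ∣ Nat.gcd m (Fintype.card Fq) := Nat.dvd_gcd hchar hdvd
    rw [hcop] at this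
    have := Nat.le_of_dvd one_pos this
    have := hp.two_le
    omega
  have hlamF : algebraMap Fq F lam ≠ 0 := by
    simpa using (map_ne_zero_iff _ (algebraMap Fq F).injective).mpr hlam
  set μ : F := algebraMap Fq F lam with hμ
  set P : F[X] := X ^ m - C μ with hP
  have hPmap : P = Polynomial.map (algebraMap Fq F) (X ^ m - C lam) := by
    rw [Polynomial.map_sub, Polynomial.map_pow, Polynomial.map_X, Polynomial.map_C]
  have hfqmonic : (X ^ m - C lam : Polynomial Fq).Monic := monic_X_pow_sub_C _ hm0
  have hPsplits : P.Splits := by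
    rw [hPmap]
    exact hsplit.splits
  -- coordinate formula for H *ᵥ z
  have hHz : ∀ (z : ZMod m × Fin ℓ → F) (i : Fin t) (r : Fin (n i)),
      (H.mulVec z) ⟨i, r⟩ = ∑ j, V i r j * Polynomial.eval (β i) (colPoly m z j) := by
    intro z i r
    rw [Matrix.mulVec]
    show ∑ p : ZMod m × Fin ℓ, H ⟨i, r⟩ p * z p = _
    rw [Fintype.sum_prod_type]
    rw [Finset.sum_comm]
    apply Finset.sum_congr rfl
    intro j _
    rw [colPoly_eval, Finset.mul_sum]
    apply Finset.sum_congr rfl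
    intro k _
    rw [hH]
    ring
  -- rows of V i are in the kernel of G(β i)
  have hVker : ∀ (i : Fin t) (r : Fin (n i)),
      (G.map fun p => Polynomial.aeval (β i) p).mulVec (V i r) = 0 := by
    intro i r
    have : V i r ∈ Submodule.span F (Set.range fun r => V i r) :=
      Submodule.subset_span ⟨r, rfl⟩
    rw [hVspan i] at this
    simpa [Matrix.mulVecLin_apply] using this
  set 𝓒F : Submodule F (ZMod m × Fin ℓ → F) :=
    Submodule.span F ((fun c => (algebraMap Fq F) ∘ c) '' (𝓒 : Set (ZMod m × Fin ℓ → Fq)))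
    with h𝓒F
  have hker : LinearMap.ker H.mulVecLin = 𝓒F := by
    apply le_antisymm
    · intro z hz
      rw [LinearMap.mem_ker, Matrix.mulVecLin_apply] at hz
      set Ω : Finset F := P.roots.toFinset with hΩ
      have hPne : P ≠ 0 := (monic_X_pow_sub_C μ hm0).ne_zero
      have hroots : ∀ x ∈ Ω, x ^ m = μ := by
        intro x hx
        rw [hΩ, Multiset.mem_toFinset, Polynomial.mem_roots hPne] at hx
        have := hx
        rw [Polynomial.IsRoot, hP] at this
        simp only [Polynomial.eval_sub, Polynomial.eval_pow, Polynomial.eval_X,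
          Polynomial.eval_C, sub_eq_zero] at this
        exact this
      have hexa : ∀ x ∈ Ω, ∃ a : Fin ℓ → F,
          Matrix.vecMul a (G.map fun p => Polynomial.aeval x p) =
            fun j => Polynomial.eval x (colPoly m z j) := by
        intro x hx
        apply perp_ker_mem_range_vecMul
        intro v hv
        by_cases hdet : Polynomial.aeval x G.det = 0
        · obtain ⟨i, hix⟩ := hβall x (hroots x hx) hdet
          subst hix
          have hvmem : v ∈ Submodule.span F (Set.range fun r => V i r) := by
            rw [hVspan i, LinearMap.mem_ker, Matrix.mulVecLin_apply]
            exact hv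
          let ψ : (Fin ℓ → F) →ₗ[F] F :=
            { toFun := fun w => ∑ j, Polynomial.eval (β i) (colPoly m z j) * w j
              map_add' := by
                intro a b
                simp [mul_add, Finset.sum_add_distrib]
              map_smul' := by
                intro c a
                simp only [Pi.smul_apply, smul_eq_mul, RingHom.id_apply, Finset.mul_sum]
                apply Finset.sum_congr rfl
                intro j _
                ring }
          have hle : Submodule.span F (Set.range fun r => V i r) ≤ LinearMap.ker ψ := by
            rw [Submodule.span_le]
            rintro _ ⟨r, rfl⟩
            rw [SetLike.mem_coe, LinearMap.mem_ker]
            have h0 := congrFun hz ⟨i, r⟩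
            rw [hHz, Pi.zero_apply] at h0
            show ∑ j, Polynomial.eval (β i) (colPoly m z j) * V i r j = 0
            rw [← h0]
            apply Finset.sum_congr rfl
            intro j _
            ring
          have := hle hvmem
          rw [LinearMap.mem_ker] at this
          exact this
        · have hdet' : (G.map fun p => Polynomial.aeval x p).det ≠ 0 := by
            have hmd := RingHom.map_det (Polynomial.aeval x).toRingHom G
            simp only [AlgHom.toRingHom_eq_coe, RingHom.coe_coe,
              RingHom.mapMatrix_apply] at hmd
            rw [← hmd]
            exact hdet
          rw [Matrix.eq_zero_of_mulVec_eq_zero hdet' hv, dotProduct_zero]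
      choose aa haa using hexa
      set va : F → Fin ℓ → F := fun x => if hx : x ∈ Ω then aa x hx else 0 with hva
      set A : Fin ℓ → F[X] :=
        (fun k => Lagrange.interpolate Ω id (fun x => va x k)) with hA
      set mg : Fin ℓ → Fin ℓ → F[X] :=
        (fun k j => Polynomial.map (algebraMap Fq F) (G k j)) with hmg
      set u : Fin ℓ → F[X] := (fun j => colPoly m z j - ∑ k, A k * mg k j) with hu
      have hvan : ∀ j, ∀ x ∈ Ω, Polynomial.eval x (u j) = 0 := by
        intro j x hx
        rw [hu]
        simp only [Polynomial.eval_sub, Polynomial.eval_finset_sum, Polynomial.eval_mul]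
        have hAx : ∀ k, Polynomial.eval x (A k) = aa x hx k := by
          intro k
          rw [hA]
          have := Lagrange.eval_interpolate_at_node (fun x => va x k)
            (Set.injOn_id (Ω : Set F)) hx
          simp only [id] at this
          rw [this, hva]
          simp [hx]
        have hmgx : ∀ k, Polynomial.eval x (mg k j) = Polynomial.aeval x (G k j) := by
          intro k
          rw [hmg]
          rw [Polynomial.eval_map, Polynomial.aeval_def]
        have hsum := congrFun (haa x hx) j
        simp only [Matrix.vecMul, dotProduct, Matrix.map_apply] at hsum
        rw [sub_eq_zero]
        rw [← hsum]
        apply Finset.sum_congr rfl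
        intro k _
        rw [hAx, hmgx]
      have hdvd : ∀ j, P ∣ u j := by
        intro j
        exact dvd_of_vanish_on_roots m μ hlamF hmF hPsplits (u j) (fun x hx => hvan j x hx)
      -- express z as a combination of extended codewords
      have hzval : ∀ p : ZMod m × Fin ℓ, z p =
          ∑ k, ∑ d ∈ Finset.range ((A k).natDegree + 1),
            (A k).coeff d * algebraMap Fq F
              (arrOf m ℓ lam (fun j => X ^ d * G k j) p) := by
        intro p
        have hz1 : z p = ((colPoly m z p.2) %ₘ P).coeff p.1.val := by
          rw [colPoly_modByMonic, colPoly_coeff]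
        rw [hz1]
        have hsplitz : colPoly m z p.2 = u p.2 + ∑ k, A k * mg k p.2 := by
          rw [hu]; ring
        rw [hsplitz, Polynomial.add_modByMonic]
        have hu0 : u p.2 %ₘ P = 0 :=
          (Polynomial.modByMonic_eq_zero_iff_dvd (monic_X_pow_sub_C μ hm0)).mpr (hdvd p.2)
        rw [hu0, zero_add, sum_modByMonic, Polynomial.finset_sum_coeff]
        apply Finset.sum_congr rfl
        intro k _
        -- expand A k into monomials
        have hAk : A k * mg k p.2 =
            ∑ d ∈ Finset.range ((A k).natDegree + 1),
              (A k).coeff d • (X ^ d * mg k p.2) := by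
          conv_lhs => rw [Polynomial.as_sum_range (A k)]
          rw [Finset.sum_mul]
          apply Finset.sum_congr rfl
          intro d _
          rw [← Polynomial.C_mul_X_pow_eq_monomial, Polynomial.smul_eq_C_mul, mul_assoc]
        rw [hAk, sum_modByMonic, Polynomial.finset_sum_coeff]
        apply Finset.sum_congr rfl
        intro d _
        rw [Polynomial.smul_modByMonic, Polynomial.coeff_smul, smul_eq_mul]
        congr 1
        have hmap : (X ^ d * mg k p.2 : F[X]) =
            Polynomial.map (algebraMap Fq F) (X ^ d * G k p.2) := by
          rw [Polynomial.map_mul, Polynomial.map_pow, Polynomial.map_X, hmg]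
        rw [hmap, hPmap, ← Polynomial.map_modByMonic (algebraMap Fq F) hfqmonic, Polynomial.coeff_map]
        rfl
      -- conclude membership in 𝓒F
      have hzfun : z = ∑ k, ∑ d ∈ Finset.range ((A k).natDegree + 1),
          ((A k).coeff d) • ((algebraMap Fq F) ∘ (arrOf m ℓ lam (fun j => X ^ d * G k j))) := by
        funext p
        rw [hzval p]
        simp [Finset.sum_apply, Function.comp]
      rw [hzfun]
      apply Submodule.sum_mem
      intro k _
      apply Submodule.sum_mem
      intro d _
      apply Submodule.smul_mem
      apply Submodule.subset_span
      refine ⟨arrOf m ℓ lam (fun j => X ^ d * G k j), ?_, rfl⟩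
      rw [SetLike.mem_coe]
      apply (hGen _).mpr
      have heq : (fun j => (X : Polynomial Fq) ^ d * G k j) =
          (X : Polynomial Fq) ^ d • (fun j => G k j) := by
        funext j
        rw [Pi.smul_apply, smul_eq_mul]
      rw [heq]
      exact Submodule.smul_mem _ _ (Submodule.subset_span ⟨k, rfl⟩)
    · rw [h𝓒F, Submodule.span_le]
      rintro _ ⟨c, hc, rfl⟩
      rw [SetLike.mem_coe, LinearMap.mem_ker, Matrix.mulVecLin_apply]
      funext ir
      obtain ⟨i, r⟩ := ir
      rw [hHz, Pi.zero_apply]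
      -- the column polynomials of c lie in the row span of G
      have harr : arrOf m ℓ lam (fun j => colPoly m c j) = c := by
        funext p
        rw [arrOf, colPoly_modByMonic, colPoly_coeff]
      have hmem : (fun j => colPoly m c j) ∈
          Submodule.span (Polynomial Fq) (Set.range fun i j => G i j) :=
        (hGen _).mp (by rw [harr]; exact hc)
      obtain ⟨a, ha⟩ := (Submodule.mem_span_range_iff_exists_fun _).mp hmem
      have hcolj : ∀ j, colPoly m c j = ∑ k, a k * G k j := by
        intro j
        have := congrFun ha j
        simpa [Finset.sum_apply] using this.symm
      have hcol : ∀ j, colPoly m (fun p => algebraMap Fq F (c p)) j =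
          Polynomial.map (algebraMap Fq F) (colPoly m c j) := fun j => (colPoly_map _ m c j).symm
      calc ∑ j, V i r j * Polynomial.eval (β i) (colPoly m (fun p => algebraMap Fq F (c p)) j)
          = ∑ j, V i r j * ∑ k, Polynomial.aeval (β i) (a k) * Polynomial.aeval (β i) (G k j) := by
            apply Finset.sum_congr rfl
            intro j _
            rw [hcol, Polynomial.eval_map, ← Polynomial.aeval_def, hcolj, map_sum]
            congr 1
            apply Finset.sum_congr rfl
            intro k _
            rw [map_mul]
        _ = ∑ k, Polynomial.aeval (β i) (a k) *
              ∑ j, (G.map fun p => Polynomial.aeval (β i) p) k j * V i r j := by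
            simp_rw [Finset.mul_sum]
            rw [Finset.sum_comm]
            apply Finset.sum_congr rfl
            intro k _
            apply Finset.sum_congr rfl
            intro j _
            rw [Matrix.map_apply]
            ring
        _ = 0 := by
            apply Finset.sum_eq_zero
            intro k _
            have := congrFun (hVker i r) k
            rw [Matrix.mulVec] at this
            simp only [Pi.zero_apply] at this
            rw [show ∑ j, (G.map fun p => Polynomial.aeval (β i) p) k j * V i r j =
              (0 : F) from this, mul_zero]
  have h1 : H.rank + Module.finrank F (LinearMap.ker H.mulVecLin) = m * ℓ := by
    have := LinearMap.finrank_range_add_finrank_ker H.mulVecLin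
    rw [Matrix.rank]
    rw [this]
    simp [ZMod.card]
  have h2 : Module.finrank F 𝓒F = Module.finrank Fq 𝓒 := finrank_span_algebraMap_image 𝓒
  have h3 : Module.finrank Fq 𝓒 ≤ m * ℓ := by
    have := Submodule.finrank_le 𝓒
    simpa [ZMod.card] using this
  rw [hker, h2] at h1
  omega
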